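/- (OMP increment lemma.) Let l : ℝ^p → ℝ be differentiable with associated set function f(S) = l(β^{(S)}) − l(0), let S* be a set of size k, and let S = S_i^P be the set selected after i steps of OMP. Suppose l is m-strongly concave on Ω_{i+k} and M̃-smooth on Ω̃_{i+1}, with 0 < m ≤ M̃. Then k · (f(S_{i+1}^P) − f(S_i^P)) ≥ (m/M̃) · (f(S*) − f(S_i^P)). -/

import Mathlib

open Finset

noncomputable section

/-- Number of nonzero coordinates (the "ℓ₀ norm") of a vector. -/
def spar {p : ℕ} (v : Fin p → ℝ) : ℕ := (Finset.univ.filter fun i => v i ≠ 0).card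

/-- Support of a vector, as a `Finset`. -/
def suppF {p : ℕ} (v : Fin p → ℝ) : Finset (Fin p) :=
  Finset.univ.filter fun i => v i ≠ 0

/-- `Ω_k`: pairs of `k`-sparse vectors differing in at most `k` coordinates. -/
def Omega {p : ℕ} (k : ℕ) : Set ((Fin p → ℝ) × (Fin p → ℝ)) :=
  {q | spar q.1 ≤ k ∧ spar q.2 ≤ k ∧ spar (q.1 - q.2) ≤ k}

/-- `Ω̃_k`: pairs of `k`-sparse vectors differing in at most one coordinate. -/
def OmegaT {p : ℕ} (k : ℕ) : Set ((Fin p → ℝ) × (Fin p → ℝ)) :=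
  {q | spar q.1 ≤ k ∧ spar q.2 ≤ k ∧ spar (q.1 - q.2) ≤ 1}

/-- `l` is `m`-strongly concave on `Ω`. -/
def RStrongConcaveOn {p : ℕ} (l : (Fin p → ℝ) → ℝ) (m : ℝ)
    (Ω : Set ((Fin p → ℝ) × (Fin p → ℝ))) : Prop :=
  ∀ x y : Fin p → ℝ, (x, y) ∈ Ω →
    l y - l x - fderiv ℝ l x (y - x) ≤ -(m / 2) * ∑ i, (y i - x i) ^ 2

/-- `l` is `M`-smooth on `Ω`. -/
def RSmoothOn {p : ℕ} (l : (Fin p → ℝ) → ℝ) (M : ℝ)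
    (Ω : Set ((Fin p → ℝ) × (Fin p → ℝ))) : Prop :=
  ∀ x y : Fin p → ℝ, (x, y) ∈ Ω →
    -(M / 2) * ∑ i, (y i - x i) ^ 2 ≤ l y - l x - fderiv ℝ l x (y - x)

lemma spar_eq_card_suppF {p : ℕ} (v : Fin p → ℝ) : spar v = (suppF v).card := rfl

lemma mem_suppF {p : ℕ} {v : Fin p → ℝ} {j : Fin p} : j ∈ suppF v ↔ v j ≠ 0 := by
  simp [suppF]

lemma not_mem_suppF {p : ℕ} {v : Fin p → ℝ} {j : Fin p} (h : j ∉ suppF v) : v j = 0 := by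
  by_contra hv; exact h (mem_suppF.mpr hv)

lemma clm_apply_eq_sum {p : ℕ} (L : (Fin p → ℝ) →L[ℝ] ℝ) (v : Fin p → ℝ) :
    L v = ∑ j, v j * L (Pi.single j 1) := by
  have hv : v = ∑ j, v j • (Pi.single j 1 : Fin p → ℝ) := by
    ext i
    simp [Pi.single_apply, Finset.sum_ite_eq]
  calc L v = L (∑ j, v j • (Pi.single j 1 : Fin p → ℝ)) := by rw [← hv]
  _ = ∑ j, v j * L (Pi.single j 1) := by rw [map_sum]; simp

lemma grad_zero {p : ℕ} (l : (Fin p → ℝ) → ℝ) (hl : Differentiable ℝ l)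
    (β : Finset (Fin p) → (Fin p → ℝ))
    (hβsupp : ∀ S : Finset (Fin p), suppF (β S) ⊆ S)
    (hβmax : ∀ S : Finset (Fin p), ∀ v : Fin p → ℝ, suppF v ⊆ S → l v ≤ l (β S))
    (S : Finset (Fin p)) {j : Fin p} (hj : j ∈ S) :
    fderiv ℝ l (β S) (Pi.single j 1) = 0 := by
  set x := β S with hx
  set e : Fin p → ℝ := Pi.single j 1 with he
  have hderiv : HasDerivAt (fun t : ℝ => l (x + t • e)) (fderiv ℝ l x e) 0 := by
    have h1 : HasDerivAt (fun t : ℝ => x + t • e) e 0 := by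
      simpa using ((hasDerivAt_id (0:ℝ)).smul_const e).const_add x
    have h2 : HasFDerivAt l (fderiv ℝ l x) (x + (0:ℝ) • e) := by
      simpa using (hl x).hasFDerivAt
    exact h2.comp_hasDerivAt 0 h1
  have hmax : IsLocalMax (fun t : ℝ => l (x + t • e)) 0 := by
    apply Filter.Eventually.of_forall
    intro t
    have hsupp : suppF (x + t • e) ⊆ S := by
      intro a ha
      have hne : (x + t • e) a ≠ 0 := mem_suppF.mp ha
      by_contra haS
      have hxa : x a = 0 := not_mem_suppF (fun h => haS (hβsupp S h))
      have hea : e a = 0 := by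
        have : a ≠ j := fun h => haS (h ▸ hj)
        simp [he, Pi.single_apply, this]
      apply hne
      simp [Pi.add_apply, hxa, hea]
    have := hβmax S _ hsupp
    simpa using this
  have := hmax.hasDerivAt_eq_zero hderiv
  simpa using this

/-- OMP increment lemma. -/
theorem omp_increment
    (p : ℕ) (l : (Fin p → ℝ) → ℝ) (hl : Differentiable ℝ l)
    (β : Finset (Fin p) → (Fin p → ℝ))
    (hβsupp : ∀ S : Finset (Fin p), suppF (β S) ⊆ S)
    (hβmax : ∀ S : Finset (Fin p), ∀ v : Fin p → ℝ, suppF v ⊆ S → l v ≤ l (β S))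
    (f : Finset (Fin p) → ℝ) (hf : ∀ S, f S = l (β S) - l 0)
    (k : ℕ) (Sstar : Finset (Fin p)) (hSstarcard : Sstar.card = k)
    (Sp : ℕ → Finset (Fin p)) (s : ℕ → Fin p)
    (hSp0 : Sp 0 = ∅)
    (hSps : ∀ i, Sp (i + 1) = insert (s i) (Sp i))
    (homp : ∀ i, ∀ j : Fin p, |fderiv ℝ l (β (Sp i)) (Pi.single j 1)| ≤
      |fderiv ℝ l (β (Sp i)) (Pi.single (s i) 1)|)
    (i : ℕ) (hcard : (Sp i).card = i)
    (m M : ℝ) (hm : 0 < m) (hmM : m ≤ M)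
    (hconc : RStrongConcaveOn l m (Omega (i + k)))
    (hsmooth : RSmoothOn l M (OmegaT (i + 1))) :
    (m / M) * (f Sstar - f (Sp i)) ≤ (k : ℝ) * (f (Sp (i + 1)) - f (Sp i)) := by
  have hM : 0 < M := lt_of_lt_of_le hm hmM
  set S := Sp i with hS
  set x := β S with hxdef
  set D : Fin p → ℝ := fun j => fderiv ℝ l x (Pi.single j 1) with hD
  set G := D (s i) with hG
  have habs : ∀ j, |D j| ≤ |G| := fun j => homp i j
  have hDzero : ∀ j ∈ S, D j = 0 := fun j hj =>
    grad_zero l hl β hβsupp hβmax S hj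
  have hsparx : spar x ≤ i := by
    rw [spar_eq_card_suppF, ← hcard]
    exact Finset.card_le_card (hβsupp S)
  -- Part A
  set y := β Sstar with hy
  have hsparysupp : suppF y ⊆ Sstar := hβsupp Sstar
  have hmemA : ((x, y) : (Fin p → ℝ) × (Fin p → ℝ)) ∈ Omega (i + k) := by
    refine ⟨le_trans hsparx (Nat.le_add_right _ _), ?_, ?_⟩
    · rw [spar_eq_card_suppF]
      calc (suppF y).card ≤ Sstar.card := Finset.card_le_card hsparysupp
      _ = k := hSstarcard
      _ ≤ i + k := Nat.le_add_left _ _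
    · rw [spar_eq_card_suppF]
      have hsub : suppF (x - y) ⊆ S ∪ Sstar := by
        intro a ha
        have hne : (x - y) a ≠ 0 := mem_suppF.mp ha
        by_contra hc
        simp only [Finset.mem_union, not_or] at hc
        have hxa : x a = 0 := not_mem_suppF (fun h => hc.1 (hβsupp S h))
        have hya : y a = 0 := not_mem_suppF (fun h => hc.2 (hsparysupp h))
        exact hne (by simp [Pi.sub_apply, hxa, hya])
      calc (suppF (x - y)).card ≤ (S ∪ Sstar).card := Finset.card_le_card hsub
      _ ≤ S.card + Sstar.card := Finset.card_union_le _ _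
      _ = i + k := by rw [hcard, hSstarcard]
  have hA0 := hconc x y hmemA
  have hLsum : fderiv ℝ l x (y - x) = ∑ j, (y j - x j) * D j := by
    rw [clm_apply_eq_sum]
    exact Finset.sum_congr rfl (fun j _ => by simp [hD])
  have hterm : ∀ j, (y j - x j) * D j - (m/2) * (y j - x j)^2 ≤
      (if j ∈ Sstar \ S then G^2/(2*m) else 0) := by
    intro j
    by_cases hjS : j ∈ S
    · rw [hDzero j hjS, if_neg (fun h => (Finset.mem_sdiff.mp h).2 hjS)]
      nlinarith [sq_nonneg (y j - x j), hm.le]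
    · by_cases hjT : j ∈ Sstar
      · rw [if_pos (Finset.mem_sdiff.mpr ⟨hjT, hjS⟩)]
        have h2 : (D j)^2 ≤ G^2 := by
          have h1 := habs j
          nlinarith [abs_nonneg (D j), sq_abs (D j), sq_abs G]
        have h3 : (y j - x j) * D j - m/2 * (y j - x j)^2 ≤ (D j)^2/(2*m) := by
          rw [le_div_iff₀ (by positivity : (0:ℝ) < 2*m)]
          nlinarith [sq_nonneg (D j - m * (y j - x j))]
        have h4 : (D j)^2/(2*m) ≤ G^2/(2*m) := by gcongr
        linarith
      · have hyj : y j = 0 := not_mem_suppF (fun h => hjT (hsparysupp h))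
        have hxj : x j = 0 := not_mem_suppF (fun h => hjS (hβsupp S h))
        rw [if_neg (fun h => hjT (Finset.mem_sdiff.mp h).1)]
        simp [hyj, hxj]
  have hsum : ∑ j, ((y j - x j) * D j - (m/2) * (y j - x j)^2) ≤ (k:ℝ) * (G^2/(2*m)) := by
    calc ∑ j, ((y j - x j) * D j - (m/2) * (y j - x j)^2)
        ≤ ∑ j, (if j ∈ Sstar \ S then G^2/(2*m) else 0) :=
          Finset.sum_le_sum (fun j _ => hterm j)
    _ = ((Sstar \ S).card : ℝ) * (G^2/(2*m)) := by
        rw [Finset.sum_ite_mem, Finset.univ_inter, Finset.sum_const, nsmul_eq_mul]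
    _ ≤ (k:ℝ) * (G^2/(2*m)) := by
        have hc : (((Sstar \ S).card : ℕ) : ℝ) ≤ (k : ℝ) := by
          exact_mod_cast hSstarcard ▸ Finset.card_le_card (Finset.sdiff_subset)
        exact mul_le_mul_of_nonneg_right hc (by positivity)
  have hPartA : f Sstar - f S ≤ (k:ℝ) * (G^2/(2*m)) := by
    rw [hf, hf]
    have hrw : l y - l x ≤ ∑ j, ((y j - x j) * D j - (m/2) * (y j - x j)^2) := by
      rw [Finset.sum_sub_distrib, ← Finset.mul_sum, ← hLsum]
      linarith [hA0]
    linarith [hsum, hrw]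
  -- Part B
  set c := G / M with hc
  set yb : Fin p → ℝ := x + c • (Pi.single (s i) 1 : Fin p → ℝ) with hyb
  have hybsupp : suppF yb ⊆ insert (s i) S := by
    intro a ha
    have hne : yb a ≠ 0 := mem_suppF.mp ha
    by_contra hcn
    simp only [Finset.mem_insert, not_or] at hcn
    have hxa : x a = 0 := not_mem_suppF (fun h => hcn.2 (hβsupp S h))
    have hea : (Pi.single (s i) 1 : Fin p → ℝ) a = 0 := by
      simp [Pi.single_apply, hcn.1]
    exact hne (by simp [hyb, Pi.add_apply, hxa, hea])
  have hmemB : ((x, yb) : (Fin p → ℝ) × (Fin p → ℝ)) ∈ OmegaT (i + 1) := by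
    refine ⟨le_trans hsparx (Nat.le_succ i), ?_, ?_⟩
    · rw [spar_eq_card_suppF]
      calc (suppF yb).card ≤ (insert (s i) S).card := Finset.card_le_card hybsupp
      _ ≤ S.card + 1 := Finset.card_insert_le _ _
      _ = i + 1 := by rw [hcard]
    · rw [spar_eq_card_suppF]
      have hsub : suppF (x - yb) ⊆ {s i} := by
        intro a ha
        have hne : (x - yb) a ≠ 0 := mem_suppF.mp ha
        rw [Finset.mem_singleton]
        by_contra hcn
        exact hne (by simp [hyb, Pi.sub_apply, Pi.add_apply, Pi.single_apply, hcn])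
      calc (suppF (x - yb)).card ≤ ({s i} : Finset (Fin p)).card := Finset.card_le_card hsub
      _ = 1 := Finset.card_singleton _
  have hB0 := hsmooth x yb hmemB
  have hybx : yb - x = c • (Pi.single (s i) 1 : Fin p → ℝ) := by
    ext a; simp [hyb]
  have hLyb : fderiv ℝ l x (yb - x) = c * G := by
    rw [hybx, map_smul]
    simp [hG, hD]
  have hsumsq : ∑ j, (yb j - x j)^2 = c^2 := by
    have hterm2 : ∀ j, (yb j - x j)^2 = (if j = s i then c^2 else 0) := by
      intro j
      by_cases hjs : j = s i
      · simp [hyb, hjs]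
      · simp [hyb, Pi.single_apply, hjs]
    rw [Finset.sum_congr rfl (fun j _ => hterm2 j), Finset.sum_ite_eq']
    simp
  have hBlow : G^2/(2*M) ≤ l yb - l x := by
    rw [hLyb, hsumsq] at hB0
    have hcval : c * G - (M/2) * c^2 = G^2/(2*M) := by
      rw [hc]; field_simp; ring
    linarith [hB0]
  have hlyb : l yb ≤ l (β (Sp (i+1))) := by
    apply hβmax
    rw [hSps i]
    exact hybsupp
  have hPartB : G^2/(2*M) ≤ f (Sp (i+1)) - f S := by
    rw [hf, hf]
    linarith [hBlow, hlyb]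
  -- combine
  have key : (m/M) * ((k:ℝ) * (G^2/(2*m))) = (k:ℝ) * (G^2/(2*M)) := by
    field_simp
  have h1 : (m/M) * (f Sstar - f S) ≤ (m/M) * ((k:ℝ) * (G^2/(2*m))) :=
    mul_le_mul_of_nonneg_left hPartA (by positivity)
  have h2 : (k:ℝ) * (G^2/(2*M)) ≤ (k:ℝ) * (f (Sp (i+1)) - f S) :=
    mul_le_mul_of_nonneg_left hPartB (by positivity)
  rw [key] at h1
  linarith [h1, h2]
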